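/- Let F be an algebraically closed field and let G be an additive subgroup of ℚ that is not cyclic. Then the group algebra F[G] is an antimatter domain: F[G] is an integral domain with no irreducible elements. -/

import Mathlib

/-- A commutative ring (intended: an integral domain) is atomic if every nonzero nonunit
is a finite product of irreducible elements. -/
def AtomicDomain (A : Type*) [CommRing A] : Prop :=
  ∀ a : A, a ≠ 0 → ¬ IsUnit a → ∃ l : Multiset A, (∀ x ∈ l, Irreducible x) ∧ l.prod = a

/-- A commutative ring satisfies the ACCP if every ascending chain of principal ideals
stabilizes. -/
def RingACCP (A : Type*) [CommRing A] : Prop :=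
  ∀ f : ℕ → A, (∀ n, Ideal.span {f n} ≤ Ideal.span {f (n + 1)}) →
    ∃ N, ∀ n, N ≤ n → Ideal.span {f n} = Ideal.span {f N}

open Finsupp LaurentPolynomial Polynomial

/-- Bezout-style pair lemma in ℚ. -/
lemma antim_ratPair (a b : ℚ) :
    ∃ (c : ℚ) (u v k l : ℤ), (u : ℚ) * a + v * b = c ∧ (k : ℚ) * c = a ∧ (l : ℚ) * c = b := by
  by_cases ha : a = 0
  · exact ⟨b, 0, 1, 0, 1, by simp [ha], by simp [ha], by simp⟩
  by_cases hb : b = 0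
  · exact ⟨a, 1, 0, 1, 0, by simp [hb], by simp, by simp [hb]⟩
  set p : ℤ := a.num * b.den with hp
  set r : ℤ := b.num * a.den with hr
  set q : ℤ := (a.den : ℤ) * b.den with hq
  have had : (a.den : ℚ) ≠ 0 := by positivity
  have hbd : (b.den : ℚ) ≠ 0 := by positivity
  have hqQ : (q : ℚ) ≠ 0 := by push_cast; positivity
  have hap : (p : ℚ) / q = a := by
    rw [hp, hq]
    push_cast
    rw [mul_div_mul_right _ _ hbd, Rat.num_div_den]
  have hbp : (r : ℚ) / q = b := by
    rw [hr, hq]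
    push_cast
    rw [mul_comm ((a.den : ℚ)) ((b.den : ℚ)), mul_div_mul_right _ _ had, Rat.num_div_den]
  have hpne : p ≠ 0 := by
    simp only [hp, mul_ne_zero_iff]
    exact ⟨Rat.num_ne_zero.mpr ha, by positivity⟩
  set e : ℤ := (Int.gcd p r : ℤ) with he
  have hep : e ∣ p := Int.gcd_dvd_left p r
  have her : e ∣ r := Int.gcd_dvd_right p r
  have he0 : e ≠ 0 := by
    rw [he]
    intro h
    have h' : Int.gcd p r = 0 := by exact_mod_cast h
    exact hpne (Int.gcd_eq_zero_iff.mp h').1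
  have heQ : (e : ℚ) ≠ 0 := Int.cast_ne_zero.mpr he0
  refine ⟨(e : ℚ) / q, Int.gcdA p r, Int.gcdB p r, p / e, r / e, ?_, ?_, ?_⟩
  · rw [← hap, ← hbp]
    have hbz : (e : ℤ) = p * Int.gcdA p r + r * Int.gcdB p r := Int.gcd_eq_gcd_ab p r
    field_simp
    push_cast [hbz]
    ring
  · rw [← hap]
    rw [Int.cast_div_charZero hep]
    field_simp
  · rw [← hbp]
    rw [Int.cast_div_charZero her]
    field_simp

variable {G : AddSubgroup ℚ}

lemma antim_coe_zsmul (k : ℤ) (x : G) : ((k • x : G) : ℚ) = (k : ℚ) * (x : ℚ) := by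
  rw [← zsmul_eq_mul]
  exact map_zsmul G.subtype k x

lemma antim_subPair (a b : G) : ∃ (c : G) (k l : ℤ), k • c = a ∧ l • c = b := by
  obtain ⟨c, u, v, k, l, hc, hk, hl⟩ := antim_ratPair (a : ℚ) (b : ℚ)
  have hcoe : ((u • a + v • b : G) : ℚ) = c := by
    push_cast [antim_coe_zsmul, zsmul_eq_mul]
    exact hc
  refine ⟨u • a + v • b, k, l, ?_, ?_⟩
  · apply Subtype.ext
    rw [antim_coe_zsmul, hcoe, hk]
  · apply Subtype.ext
    rw [antim_coe_zsmul, hcoe, hl]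

lemma antim_finsetCyc (S : Finset G) : ∃ g : G, ∀ s ∈ S, ∃ k : ℤ, k • g = s := by
  classical
  induction S using Finset.induction_on with
  | empty => exact ⟨0, by simp⟩
  | @insert t S' ht ih =>
      obtain ⟨g, hg⟩ := ih
      obtain ⟨c, k, l, hk, hl⟩ := antim_subPair t g
      refine ⟨c, fun s hs => ?_⟩
      rcases Finset.mem_insert.mp hs with rfl | hs
      · exact ⟨k, hk⟩
      · obtain ⟨m, hm⟩ := hg s hs
        exact ⟨m * l, by rw [mul_smul, hl, hm]⟩

lemma antim_exists_half (hG : ¬ IsAddCyclic G) (g : G) (hg : g ≠ 0) :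
    ∃ (c : G) (n : ℕ), 2 ≤ n ∧ (n : ℤ) • c = g := by
  have : ∃ h : G, ∀ k : ℤ, k • g ≠ h := by
    by_contra hcon
    push_neg at hcon
    exact hG ⟨g, fun x => (hcon x).imp fun k hk => hk⟩
  obtain ⟨h, hh⟩ := this
  obtain ⟨c, k, l, hk, hl⟩ := antim_subPair g h
  have hk0 : k ≠ 0 := by rintro rfl; simp at hk; exact hg hk.symm
  have hk1 : k ≠ 1 := by rintro rfl; rw [one_smul] at hk; exact hh l (hk ▸ hl)
  have hkm1 : k ≠ -1 := by
    rintro rfl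
    apply hh (-l)
    have hcg : -g = c := by rw [← hk]; simp
    rw [neg_smul, ← smul_neg, hcg]
    exact hl
  rcases lt_or_gt_of_ne hk0 with hneg | hpos
  · refine ⟨-c, (-k).toNat, ?_, ?_⟩
    · omega
    · rw [Int.toNat_of_nonneg (by omega), smul_neg, ← neg_smul, neg_neg]
      exact hk
  · refine ⟨c, k.toNat, by omega, by rw [Int.toNat_of_nonneg (by omega)]; exact hk⟩

lemma antim_coe_ne_zero {c : G} (hc : c ≠ 0) : (c : ℚ) ≠ 0 := by
  simpa using hc

lemma antim_zsmul_inj {c : G} (hc : c ≠ 0) : Function.Injective fun k : ℤ => k • c := by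
  intro k l hkl
  dsimp only at hkl
  have : (k : ℚ) * (c : ℚ) = (l : ℚ) * (c : ℚ) := by
    rw [← antim_coe_zsmul, ← antim_coe_zsmul, hkl]
  have := mul_right_cancel₀ (antim_coe_ne_zero hc) this
  exact_mod_cast this

lemma antim_laurent_unit {F : Type*} [Field F] {p : LaurentPolynomial F} (h : IsUnit p) :
    ∃ (cc : F) (n : ℤ), p = LaurentPolynomial.C cc * T n := by
  obtain ⟨u, rfl⟩ := h
  have hpq : (u : LaurentPolynomial F) * ↑u⁻¹ = 1 := u.mul_inv
  obtain ⟨N, f, hf⟩ := exists_T_pow (u : LaurentPolynomial F)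
  obtain ⟨M, g, hg⟩ := exists_T_pow ((u⁻¹ : (LaurentPolynomial F)ˣ) : LaurentPolynomial F)
  have hfg : f * g = X ^ (N + M) := by
    apply Polynomial.toLaurent_injective
    rw [map_mul, hf, hg, Polynomial.toLaurent_X_pow]
    rw [mul_mul_mul_comm, hpq, one_mul, ← T_add]
    push_cast
    ring_nf
  have hdvd : f ∣ X ^ (N + M) := ⟨g, hfg.symm⟩
  obtain ⟨i, _, hassoc⟩ := (dvd_prime_pow Polynomial.prime_X (N + M)).mp hdvd
  obtain ⟨w, hw⟩ := hassoc
  obtain ⟨cc, hcc, hCcc⟩ := Polynomial.isUnit_iff.mp ((Units.isUnit w⁻¹))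
  have hfeq : f = X ^ i * Polynomial.C cc := by
    rw [hCcc]
    calc f = f * (w * ↑w⁻¹) := by rw [Units.mul_inv, mul_one]
    _ = (f * w) * ↑w⁻¹ := by ring
    _ = X ^ i * ↑w⁻¹ := by rw [hw]
  refine ⟨cc, (i : ℤ) - N, ?_⟩
  have hp : (u : LaurentPolynomial F) = Polynomial.toLaurent f * T (-(N : ℤ)) := by
    rw [hf, mul_assoc, ← T_add, add_neg_cancel, T_zero, mul_one]
  rw [hp, hfeq, map_mul, Polynomial.toLaurent_X_pow, Polynomial.toLaurent_C]
  rw [sub_eq_add_neg, T_add]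
  ring

lemma antim_unit_support_card {F : Type*} [Field F] {x : AddMonoidAlgebra F G}
    (h : IsUnit x) : x.coeff.support.card ≤ 1 := by
  classical
  obtain ⟨u, rfl⟩ := h
  set x := (u : AddMonoidAlgebra F G)
  set y := ((u⁻¹ : (AddMonoidAlgebra F G)ˣ) : AddMonoidAlgebra F G) with hy
  have hxy : x * y = 1 := u.mul_inv
  obtain ⟨g, hg⟩ := antim_finsetCyc (x.coeff.support ∪ y.coeff.support)
  by_cases hg0 : g = 0
  · have : x.coeff.support ⊆ {0} := by
      intro s hs
      obtain ⟨k, hk⟩ := hg s (Finset.mem_union_left _ hs)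
      rw [hg0, smul_zero] at hk
      simp [← hk]
    calc x.coeff.support.card ≤ ({0} : Finset G).card := Finset.card_le_card this
    _ = 1 := Finset.card_singleton 0
  · have hinj : Function.Injective fun k : ℤ => k • g := antim_zsmul_inj hg0
    set ι : ℤ →+ G := zmultiplesHom G g with hι
    have hιa : ⇑ι = fun k : ℤ => k • g := rfl
    have hinj' : Function.Injective ⇑ι := by rw [hιa]; exact hinj
    have hsx : ↑x.coeff.support ⊆ Set.range ⇑ι := by
      intro s hs
      obtain ⟨k, hk⟩ := hg s (Finset.mem_union_left _ hs)
      exact ⟨k, hk⟩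
    have hsy : ↑y.coeff.support ⊆ Set.range ⇑ι := by
      intro s hs
      obtain ⟨k, hk⟩ := hg s (Finset.mem_union_right _ hs)
      exact ⟨k, hk⟩
    set x' : AddMonoidAlgebra F ℤ := AddMonoidAlgebra.comapDomain ⇑ι hinj' x with hx'
    set y' : AddMonoidAlgebra F ℤ := AddMonoidAlgebra.comapDomain ⇑ι hinj' y with hy'
    have hmx : AddMonoidAlgebra.mapDomain ⇑ι x' = x := AddMonoidAlgebra.mapDomain_comapDomain hsx hinj'
    have hmy : AddMonoidAlgebra.mapDomain ⇑ι y' = y := AddMonoidAlgebra.mapDomain_comapDomain hsy hinj'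
    set Φ : AddMonoidAlgebra F ℤ →+* AddMonoidAlgebra F G :=
      AddMonoidAlgebra.mapDomainRingHom F ι with hΦ
    have hΦapp : ∀ z : AddMonoidAlgebra F ℤ, Φ z = AddMonoidAlgebra.mapDomain ⇑ι z := fun _ => rfl
    have h1 : Φ (x' * y') = Φ 1 := by
      rw [map_mul, map_one, hΦapp, hΦapp, hmx, hmy, hxy]
    have hΦinj : Function.Injective ⇑Φ := by
      intro s t hst
      exact AddMonoidAlgebra.mapDomain_injective hinj' (by rwa [← hΦapp, ← hΦapp])
    have hxy' : x' * y' = 1 := hΦinj h1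
    have hux' : IsUnit x' := IsUnit.of_mul_eq_one y' hxy'
    obtain ⟨cc, n, hcn⟩ := antim_laurent_unit hux'
    have : x' = AddMonoidAlgebra.single n cc := by
      rw [hcn, ← single_eq_C_mul_T]
    have hxs : x = AddMonoidAlgebra.single (ι n) cc := by
      rw [← hmx, this, AddMonoidAlgebra.mapDomain_single]
    rw [hxs]
    calc (AddMonoidAlgebra.single (ι n) cc).coeff.support.card ≤ ({ι n} : Finset G).card :=
      Finset.card_le_card (by rw [AddMonoidAlgebra.coeff_single]; exact Finsupp.support_single_subset)
    _ = 1 := Finset.card_singleton _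

lemma antim_laurent_factor {F : Type*} [Field F] [IsAlgClosed F] {p : LaurentPolynomial F}
    (hp0 : p ≠ 0) (hpu : ¬ IsUnit p) :
    ∃ (r : F) (p₂ : LaurentPolynomial F), r ≠ 0 ∧ p = (T 1 - LaurentPolynomial.C r) * p₂ := by
  obtain ⟨N, f, hf⟩ := exists_T_pow p
  have hp : p = Polynomial.toLaurent f * T (-(N : ℤ)) := by
    rw [hf, mul_assoc, ← T_add, add_neg_cancel, T_zero, mul_one]
  have hfne : f ≠ 0 := by
    rintro rfl
    rw [map_zero, zero_mul] at hp
    exact hp0 hp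
  by_cases hroot : ∃ r : F, r ≠ 0 ∧ f.IsRoot r
  · obtain ⟨r, hr0, hr⟩ := hroot
    obtain ⟨g, hgf⟩ := (Polynomial.dvd_iff_isRoot).mpr hr
    refine ⟨r, Polynomial.toLaurent g * T (-(N : ℤ)), hr0, ?_⟩
    rw [hp, hgf, map_mul, map_sub, Polynomial.toLaurent_X, Polynomial.toLaurent_C]
    ring
  · exfalso
    push_neg at hroot
    have hsplit := IsAlgClosed.splits f
    have hfeq := hsplit.eq_prod_roots
    have hmap : f.roots.map (fun a => Polynomial.X - Polynomial.C a)
        = f.roots.map (fun _ => (Polynomial.X : Polynomial F)) := by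
      apply Multiset.map_congr rfl
      intro r hrr
      have : f.IsRoot r := Polynomial.isRoot_of_mem_roots hrr
      have hr0 : r = 0 := by
        by_contra hr0
        exact hroot r hr0 this
      rw [hr0, map_zero, sub_zero]
    rw [hmap, Multiset.map_const', Multiset.prod_replicate] at hfeq
    apply hpu
    rw [hp, hfeq, map_mul, Polynomial.toLaurent_C, map_pow, Polynomial.toLaurent_X]
    have hlc : IsUnit (LaurentPolynomial.C f.leadingCoeff) :=
      (Polynomial.leadingCoeff_ne_zero.mpr hfne).isUnit.map LaurentPolynomial.C
    exact (hlc.mul ((isUnit_T 1).pow _)).mul (isUnit_T _)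

theorem alg_closed_group_algebra_antimatter (F : Type*) [Field F] [IsAlgClosed F]
    (G : AddSubgroup ℚ) (hG : ¬ IsAddCyclic G) :
    IsDomain (AddMonoidAlgebra F G) ∧
      ∀ a : AddMonoidAlgebra F G, ¬ Irreducible a := by
  classical
  refine ⟨NoZeroDivisors.to_isDomain _, fun a ha => ?_⟩
  have hu : ¬ IsUnit a := ha.not_isUnit
  have ha0 : a ≠ 0 := ha.ne_zero
  obtain ⟨g, hgspec⟩ := antim_finsetCyc a.coeff.support
  by_cases hall : ∀ s ∈ a.coeff.support, s = (0 : G)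
  · -- a is a nonzero constant, hence a unit: contradiction
    have hsub : a.coeff.support ⊆ {0} := fun s hs => Finset.mem_singleton.mpr (hall s hs)
    have haeq : a = AddMonoidAlgebra.single 0 (a.coeff 0) :=
        AddMonoidAlgebra.ext (Finsupp.support_subset_singleton.mp hsub)
    have hc0 : a.coeff 0 ≠ 0 := by
      intro hc
      apply ha0
      rw [haeq, hc]
      simp
    apply hu
    apply IsUnit.of_mul_eq_one (AddMonoidAlgebra.single 0 (a.coeff 0)⁻¹)
    rw [haeq]
    rw [AddMonoidAlgebra.single_mul_single]
    simp [mul_inv_cancel₀ hc0]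
    rfl
  · push_neg at hall
    obtain ⟨s₀, hs₀mem, hs₀⟩ := hall
    have hg0 : g ≠ 0 := by
      rintro rfl
      obtain ⟨k, hk⟩ := hgspec s₀ hs₀mem
      rw [smul_zero] at hk
      exact hs₀ hk.symm
    obtain ⟨c, n, hn2, hnc⟩ := antim_exists_half hG g hg0
    have hc0 : c ≠ 0 := by
      rintro rfl
      rw [smul_zero] at hnc
      exact hg0 hnc.symm
    -- set up map from Laurent polynomials
    set ι : ℤ →+ G := zmultiplesHom G g with hι
    have hinj : Function.Injective ⇑ι := antim_zsmul_inj hg0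
    have hsx : ↑a.coeff.support ⊆ Set.range ⇑ι := by
      intro s hs
      obtain ⟨k, hk⟩ := hgspec s hs
      exact ⟨k, hk⟩
    set p : AddMonoidAlgebra F ℤ := AddMonoidAlgebra.comapDomain ⇑ι hinj a with hpdef
    have hmp : AddMonoidAlgebra.mapDomain ⇑ι p = a := AddMonoidAlgebra.mapDomain_comapDomain hsx hinj
    set Φ : AddMonoidAlgebra F ℤ →+* AddMonoidAlgebra F G :=
      AddMonoidAlgebra.mapDomainRingHom F ι with hΦ
    have hΦapp : ∀ z : AddMonoidAlgebra F ℤ, Φ z = AddMonoidAlgebra.mapDomain ⇑ι z := fun _ => rfl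
    have hΦp : Φ p = a := by rw [hΦapp, hmp]
    have hp0 : p ≠ 0 := by
      intro hp00
      apply ha0
      rw [← hΦp, hp00, map_zero]
    have hpu : ¬ IsUnit p := fun h => hu (hΦp ▸ h.map Φ)
    obtain ⟨r, p₂, hr0, hpfac⟩ := antim_laurent_factor hp0 hpu
    -- transfer to F[G]
    have hι1 : ι 1 = g := one_zsmul g
    have hι0 : ι 0 = 0 := map_zero ι
    have hT1 : Φ (T 1 - LaurentPolynomial.C r) = AddMonoidAlgebra.single g 1 - AddMonoidAlgebra.single 0 r := by
      have e1 : (T 1 : LaurentPolynomial F) = AddMonoidAlgebra.single (1 : ℤ) (1 : F) := rfl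
      have e2 : (LaurentPolynomial.C r : LaurentPolynomial F) = AddMonoidAlgebra.single (0 : ℤ) r := rfl
      rw [map_sub, hΦapp, hΦapp, e1, e2, AddMonoidAlgebra.mapDomain_single, AddMonoidAlgebra.mapDomain_single,
        hι1, hι0]
    have haf : a = (AddMonoidAlgebra.single g 1 - AddMonoidAlgebra.single 0 r) * Φ p₂ := by
      rw [← hT1, ← map_mul, ← hpfac, hΦp]
    -- take n-th root of r
    obtain ⟨s, hs⟩ := IsAlgClosed.exists_pow_nat_eq r (n := n) (by omega)
    have hsne : s ≠ 0 := by
      rintro rfl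
      rw [zero_pow (by omega)] at hs
      exact hr0 hs.symm
    have hncn : n • c = g := by
      rw [← natCast_zsmul]
      exact hnc
    -- geometric sum factorization
    set w : AddMonoidAlgebra F G :=
      ∑ i ∈ Finset.range n, AddMonoidAlgebra.single (i • c) (s ^ (n - 1 - i)) with hwdef
    have hw : w * (AddMonoidAlgebra.single c 1 - AddMonoidAlgebra.single 0 s)
        = AddMonoidAlgebra.single g 1 - AddMonoidAlgebra.single 0 r := by
      have hgeom := geom_sum₂_mul (AddMonoidAlgebra.single c (1 : F)) (AddMonoidAlgebra.single (0 : G) s) n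
      have hterm : ∀ i ∈ Finset.range n,
          (AddMonoidAlgebra.single c (1:F)) ^ i * (AddMonoidAlgebra.single (0:G) s) ^ (n - 1 - i)
          = AddMonoidAlgebra.single (i • c) (s ^ (n - 1 - i)) := by
        intro i _
        rw [AddMonoidAlgebra.single_pow, AddMonoidAlgebra.single_pow,
          AddMonoidAlgebra.single_mul_single]
        rw [one_pow, smul_zero, add_zero, one_mul]
      rw [Finset.sum_congr rfl hterm] at hgeom
      rw [hwdef, hgeom]
      rw [AddMonoidAlgebra.single_pow, AddMonoidAlgebra.single_pow]
      rw [one_pow, hncn, smul_zero, hs]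
    have haf2 : a = (AddMonoidAlgebra.single c 1 - AddMonoidAlgebra.single 0 s) * (w * Φ p₂) := by
      rw [haf, ← hw]
      ring
    -- nat smul injectivity facts
    have hnscmul : ∀ i j : ℕ, i • c = j • c → i = j := by
      intro i j hij
      have : (i : ℤ) • c = (j : ℤ) • c := by
        rw [natCast_zsmul, natCast_zsmul, hij]
      exact_mod_cast antim_zsmul_inj hc0 this
    rcases ha.isUnit_or_isUnit haf2 with h | h
    · -- binomial is not a unit
      have hcard := antim_unit_support_card h
      have hmc : c ∈ (AddMonoidAlgebra.single c (1:F) - AddMonoidAlgebra.single 0 s).coeff.support := by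
        rw [Finsupp.mem_support_iff, AddMonoidAlgebra.coeff_sub, Finsupp.sub_apply,
          AddMonoidAlgebra.coeff_single, AddMonoidAlgebra.coeff_single, Finsupp.single_eq_same,
          Finsupp.single_eq_of_ne' (Ne.symm hc0)]
        simp
      have hm0 : (0 : G) ∈ (AddMonoidAlgebra.single c (1:F) - AddMonoidAlgebra.single 0 s).coeff.support := by
        rw [Finsupp.mem_support_iff, AddMonoidAlgebra.coeff_sub, Finsupp.sub_apply,
          AddMonoidAlgebra.coeff_single, AddMonoidAlgebra.coeff_single, Finsupp.single_eq_of_ne' hc0,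
          Finsupp.single_eq_same]
        simpa using hsne
      have : 1 < (AddMonoidAlgebra.single c (1:F) - AddMonoidAlgebra.single 0 s).coeff.support.card :=
        Finset.one_lt_card.mpr ⟨c, hmc, 0, hm0, hc0⟩
      omega
    · have hwu : IsUnit w := isUnit_of_mul_isUnit_left h
      have hcard := antim_unit_support_card hwu
      have hw0 : w.coeff 0 = s ^ (n - 1) := by
        rw [hwdef, AddMonoidAlgebra.coeff_sum, Finsupp.finset_sum_apply]
        rw [Finset.sum_eq_single_of_mem 0 (Finset.mem_range.mpr (by omega))]
        · rw [zero_smul, AddMonoidAlgebra.coeff_single, Finsupp.single_eq_same, Nat.sub_zero]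
        · intro b _ hb
          apply Finsupp.single_eq_of_ne'
          intro hbc
          exact hb (hnscmul b 0 (by rw [hbc, zero_smul]))
      have hwc : w.coeff c = s ^ (n - 2) := by
        rw [hwdef, AddMonoidAlgebra.coeff_sum, Finsupp.finset_sum_apply]
        rw [Finset.sum_eq_single_of_mem 1 (Finset.mem_range.mpr (by omega))]
        · rw [one_smul, AddMonoidAlgebra.coeff_single, Finsupp.single_eq_same]
          congr 1
        · intro b _ hb
          apply Finsupp.single_eq_of_ne'
          intro hbc
          exact hb (hnscmul b 1 (by rw [hbc, one_smul]))
      have hm0 : (0 : G) ∈ w.coeff.support := by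
        rw [Finsupp.mem_support_iff, hw0]
        exact pow_ne_zero _ hsne
      have hmc : c ∈ w.coeff.support := by
        rw [Finsupp.mem_support_iff, hwc]
        exact pow_ne_zero _ hsne
      have : 1 < w.coeff.support.card := Finset.one_lt_card.mpr ⟨c, hmc, 0, hm0, hc0⟩
      omega
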